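/- arXiv:1510.03354 — 3 statements merged into one kernel-verified Lean document; each statement's English description precedes it below -/
import Mathlib

section
/- Let f : E → V assign to each edge one of its endpoints, and let A_v = {u : f({v,u}) = v}. Then the total count Σ_{v ∈ V} |{{u,w} ∈ E : u ∈ A_v, w ∈ A_v}| counts each triangle of G at most once per triangle, and in general this sum is at most the total number of triangles T. -/
attribute [local instance] Classical.propDecidable

/-- For an endpoint assignment `f` with `A_v = {u : f {v,u} = v}`, the sum over `v`
of the number of edges with both endpoints in `A_v` is at most the number of triangles. -/
theorem stmt5 {V : Type*} [Fintype V] [DecidableEq V] (G : SimpleGraph V)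
    (f : Sym2 V → V) (hf : ∀ e ∈ G.edgeSet, f e ∈ e) :
    ∑ v : V, (G.edgeFinset.filter (fun e => ∀ x ∈ e, G.Adj v x ∧ f s(v, x) = v)).card
      ≤ (G.cliqueFinset 3).card := by
  classical
  set S : Finset ((_ : V) × Sym2 V) :=
    Finset.univ.sigma (fun v => G.edgeFinset.filter (fun e => ∀ x ∈ e, G.Adj v x ∧ f s(v, x) = v)) with hS
  have hsum : ∑ v : V, (G.edgeFinset.filter (fun e => ∀ x ∈ e, G.Adj v x ∧ f s(v, x) = v)).card = S.card := by
    rw [hS, Finset.card_sigma]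
  rw [hsum]
  apply Finset.card_le_card_of_injOn (fun p => insert p.1 (Finset.univ.filter (· ∈ p.2)))
  · rintro ⟨v, e⟩ hp
    simp only [Finset.mem_coe, hS, Finset.mem_sigma, Finset.mem_filter, Finset.mem_univ, true_and,
      SimpleGraph.mem_edgeFinset] at hp
    obtain ⟨he, hprop⟩ := hp
    induction e using Sym2.ind with
    | _ u w =>
      have huw : G.Adj u w := he
      have hu := hprop u (by simp)
      have hw := hprop w (by simp)
      have : Finset.univ.filter (· ∈ s(u, w)) = {u, w} := by
        ext x; simp [Sym2.mem_iff]
      rw [Finset.mem_coe, SimpleGraph.mem_cliqueFinset_iff]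
      constructor
      · intro a ha b hb hab
        simp only [this, Finset.coe_insert, Set.mem_insert_iff, Finset.coe_pair,
          Finset.coe_singleton, Set.mem_singleton_iff] at ha hb
        rcases ha with rfl | rfl | rfl <;> rcases hb with rfl | rfl | rfl <;>
          first | exact absurd rfl hab | assumption |
            (first | exact hu.1 | exact hw.1 | exact hu.1.symm | exact hw.1.symm | exact huw.symm)
      · dsimp only
        rw [this]
        rw [Finset.card_insert_of_notMem, Finset.card_insert_of_notMem]
        · simp
        · simp [huw.ne]
        · simp only [Finset.mem_insert, Finset.mem_singleton, not_or]
          exact ⟨hu.1.ne, hw.1.ne⟩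
  · rintro ⟨v, e⟩ hp ⟨v', e'⟩ hp' heq
    obtain ⟨he, hprop⟩ := Finset.mem_filter.mp (Finset.mem_sigma.mp hp).2
    obtain ⟨he', hprop'⟩ := Finset.mem_filter.mp (Finset.mem_sigma.mp hp').2
    dsimp only at he hprop he' hprop' heq
    have hvnot : v ∉ Finset.univ.filter (· ∈ e) := by
      simp only [Finset.mem_filter, Finset.mem_univ, true_and]
      intro hv
      exact (hprop v hv).1.ne rfl
    have hvnot' : v' ∉ Finset.univ.filter (· ∈ e') := by
      simp only [Finset.mem_filter, Finset.mem_univ, true_and]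
      intro hv
      exact (hprop' v' hv).1.ne rfl
    have hvv' : v = v' := by
      by_contra hne
      have hv : v ∈ insert v' (Finset.univ.filter (· ∈ e')) := heq ▸ Finset.mem_insert_self v _
      have hv' : v' ∈ insert v (Finset.univ.filter (· ∈ e)) := heq ▸ Finset.mem_insert_self v' _
      rw [Finset.mem_insert] at hv hv'
      have hve' : v ∈ e' := by
        rcases hv with h | h
        · exact absurd h hne
        · simpa using h
      have hv'e : v' ∈ e := by
        rcases hv' with h | h
        · exact absurd h (Ne.symm hne)
        · simpa using h
      have h1 := (hprop' v hve').2
      have h2 := (hprop v' hv'e).2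
      rw [Sym2.eq_swap] at h2
      exact hne (h2.symm.trans h1)
    subst hvv'
    have hfe : Finset.univ.filter (· ∈ e) = Finset.univ.filter (· ∈ e') := by
      have h := congrArg (fun s => Finset.erase s v) heq
      simpa [Finset.erase_insert hvnot, Finset.erase_insert hvnot'] using h
    have : e = e' := by
      apply Sym2.ext
      intro x
      constructor <;> intro hx
      · have : x ∈ Finset.univ.filter (· ∈ e') := hfe ▸ (by simpa using hx)
        simpa using this
      · have : x ∈ Finset.univ.filter (· ∈ e) := hfe ▸ (by simpa using hx)
        simpa using this
    rw [this]
end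

section
/- In the responsible-vertex scanning process, the number of responsible vertices produced is at most |V| − 1 whenever the graph has at least one edge and is loopless. -/
attribute [local instance] Classical.propDecidable

/-- State of the responsible-vertex scanning process. -/
structure ScanState (V : Type*) [DecidableEq V] where
  R : Finset V
  A : V → Finset V

/-- One step of the scan. -/
def scanStep {V : Type*} [DecidableEq V] (st : ScanState V) (p : V × V) : ScanState V :=
  if p.1 ∈ st.R then ⟨st.R, Function.update st.A p.1 (insert p.2 (st.A p.1))⟩
  else if p.2 ∈ st.R then ⟨st.R, Function.update st.A p.2 (insert p.1 (st.A p.2))⟩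
  else ⟨insert p.1 st.R, Function.update st.A p.1 {p.2}⟩

/-- The scan over a list of edges. -/
def scanRun {V : Type*} [DecidableEq V] (l : List (V × V)) : ScanState V :=
  l.foldl scanStep ⟨∅, fun _ => ∅⟩

lemma scan_ne_univ {V : Type*} [Fintype V] [DecidableEq V] :
    ∀ (l : List (V × V)) (st : ScanState V), (∀ p ∈ l, p.1 ≠ p.2) →
      st.R ≠ Finset.univ → (l.foldl scanStep st).R ≠ Finset.univ := by
  intro l
  induction l with
  | nil => intro st _ h; simpa using h
  | cons p t ih =>
    intro st hl hst
    simp only [List.foldl_cons]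
    apply ih _ (fun q hq => hl q (List.mem_cons_of_mem _ hq))
    unfold scanStep
    split_ifs with h1 h2
    · exact hst
    · exact hst
    · intro hc
      have hp2 : p.2 ∉ insert p.1 st.R := by
        simp only [Finset.mem_insert]
        push_neg
        exact ⟨fun h => (hl p List.mem_cons_self) h.symm, h2⟩
      simp only [] at hc
      exact hp2 (hc ▸ Finset.mem_univ p.2)

/-- If the graph has at least one edge, the number of responsible vertices produced
by the scan is at most `|V| - 1`. -/
theorem stmt7 {V : Type*} [Fintype V] [DecidableEq V] (G : SimpleGraph V)
    (l : List (V × V))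
    (h1 : (l.map (fun p => s(p.1, p.2))).Nodup)
    (h2 : ∀ e : Sym2 V, e ∈ l.map (fun p => s(p.1, p.2)) ↔ e ∈ G.edgeSet)
    (hne : G.edgeFinset.Nonempty) :
    (scanRun l).R.card ≤ Fintype.card V - 1 := by
  have hl : ∀ p ∈ l, p.1 ≠ p.2 := by
    intro p hp
    have : s(p.1, p.2) ∈ G.edgeSet := by
      rw [← h2]
      exact List.mem_map_of_mem hp
    exact (G.mem_edgeSet.mp this).ne
  have hV : Nonempty V := by
    obtain ⟨e, he⟩ := hne
    induction e with
    | h a b => exact ⟨a⟩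
  have hbase : (⟨∅, fun _ => ∅⟩ : ScanState V).R ≠ Finset.univ := by
    simp only []
    intro h
    obtain ⟨v⟩ := hV
    have := h ▸ Finset.mem_univ v
    simp at this
  have hne' := scan_ne_univ l _ hl hbase
  have hlt : (scanRun l).R.card < Fintype.card V := by
    rw [← Finset.card_univ]
    exact Finset.card_lt_card ((Finset.subset_univ _).ssubset_of_ne hne')
  omega
end

section
/- If in the endpoint-assignment model every triangle is counted at at most one vertex and at least one vertex, then the pipelined triangle count Σ_v |{{u,w} ∈ E : u,w ∈ A_v}| equals the true number of triangles T; moreover for the orientation f that assigns each edge to its endpoint of lower degree (ties broken by a total order on V), every triangle is counted at exactly one vertex. -/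
attribute [local instance] Classical.propDecidable

set_option maxHeartbeats 1000000

section Aux

variable {V : Type*}

private lemma min3_aux (r : V → V → Prop)
    (trich : ∀ a b : V, a ≠ b → r a b ∨ r b a)
    (asymm : ∀ a b : V, r a b → ¬ r b a)
    (tr : ∀ a b c : V, r a b → r b c → r a c)
    (a b c : V) (hab : a ≠ b) (hbc : b ≠ c) (hac : a ≠ c) :
    ∃! v : V, (v = a ∨ v = b ∨ v = c) ∧
      ∀ y : V, (y = a ∨ y = b ∨ y = c) → y ≠ v → r v y := by
  have ex : ∃ v : V, (v = a ∨ v = b ∨ v = c) ∧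
      ∀ y : V, (y = a ∨ y = b ∨ y = c) → y ≠ v → r v y := by
    rcases trich a b hab with h1 | h1
    · rcases trich a c hac with h2 | h2
      · refine ⟨a, Or.inl rfl, ?_⟩
        intro y hy hne
        rcases hy with rfl | rfl | rfl
        · exact absurd rfl hne
        · exact h1
        · exact h2
      · rcases trich b c hbc with h3 | h3
        · exact absurd (tr _ _ _ h2 h1) (asymm _ _ h3)
        · refine ⟨c, Or.inr (Or.inr rfl), ?_⟩
          intro y hy hne
          rcases hy with rfl | rfl | rfl
          · exact h2
          · exact h3
          · exact absurd rfl hne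
    · rcases trich b c hbc with h3 | h3
      · refine ⟨b, Or.inr (Or.inl rfl), ?_⟩
        intro y hy hne
        rcases hy with rfl | rfl | rfl
        · exact h1
        · exact absurd rfl hne
        · exact h3
      · refine ⟨c, Or.inr (Or.inr rfl), ?_⟩
        intro y hy hne
        rcases hy with rfl | rfl | rfl
        · exact tr _ _ _ h3 h1
        · exact h3
        · exact absurd rfl hne
  obtain ⟨v, hv⟩ := ex
  refine ⟨v, hv, ?_⟩
  intro w hw
  by_contra hne
  exact asymm v w (hv.2 w hw.1 hne) (hw.2 v hv.1 fun h => hne h.symm)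

variable [LinearOrder V]

private lemma prec_trich (d : V → ℕ) (a b : V) (h : a ≠ b) :
    (d a < d b ∨ (d a = d b ∧ a < b)) ∨ (d b < d a ∨ (d b = d a ∧ b < a)) := by
  rcases lt_trichotomy (d a) (d b) with h1 | h1 | h1
  · exact Or.inl (Or.inl h1)
  · rcases lt_or_gt_of_ne h with h2 | h2
    · exact Or.inl (Or.inr ⟨h1, h2⟩)
    · exact Or.inr (Or.inr ⟨h1.symm, h2⟩)
  · exact Or.inr (Or.inl h1)

private lemma prec_asymm (d : V → ℕ) (a b : V) :
    (d a < d b ∨ (d a = d b ∧ a < b)) → ¬(d b < d a ∨ (d b = d a ∧ b < a)) := by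
  rintro (h | ⟨h, h'⟩) (g | ⟨g, g'⟩)
  · omega
  · omega
  · omega
  · exact lt_asymm h' g'

private lemma prec_trans (d : V → ℕ) (a b c : V) :
    (d a < d b ∨ (d a = d b ∧ a < b)) → (d b < d c ∨ (d b = d c ∧ b < c)) →
    (d a < d c ∨ (d a = d c ∧ a < c)) := by
  rintro (h | ⟨h, h'⟩) (g | ⟨g, g'⟩)
  · exact Or.inl (h.trans g)
  · exact Or.inl (by omega)
  · exact Or.inl (by omega)
  · exact Or.inr ⟨h.trans g, h'.trans g'⟩

private lemma pair_inf_sup (u w : V) :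
    ({(s(u, w)).inf, (s(u, w)).sup} : Finset V) = {u, w} := by
  rcases le_total u w with h | h
  · rw [Sym2.inf_mk, Sym2.sup_mk, inf_eq_left.mpr h, sup_eq_right.mpr h]
  · rw [Sym2.inf_mk, Sym2.sup_mk, inf_eq_right.mpr h, sup_eq_left.mpr h,
      Finset.pair_comm]

private lemma count_eq [Fintype V] (G : SimpleGraph V) (f : Sym2 V → V)
    (huniq : ∀ a b c : V, G.Adj a b → G.Adj b c → G.Adj a c →
      ∃! v : V, (v = a ∨ v = b ∨ v = c) ∧
        ∀ y : V, (y = a ∨ y = b ∨ y = c) → y ≠ v → (G.Adj v y ∧ f s(v, y) = v)) :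
    ∑ v : V, (G.edgeFinset.filter (fun e => ∀ x ∈ e, G.Adj v x ∧ f s(v, x) = v)).card
      = (G.cliqueFinset 3).card := by
  have main : ∀ v : V, ∀ e ∈ G.edgeFinset.filter
      (fun e => ∀ x ∈ e, G.Adj v x ∧ f s(v, x) = v),
      ∃ u w : V, e = s(u, w) ∧ G.Adj u w ∧ G.Adj v u ∧ G.Adj v w ∧
        f s(v, u) = v ∧ f s(v, w) = v := by
    intro v e he
    rw [Finset.mem_filter] at he
    obtain ⟨he1, he2⟩ := he
    revert he1 he2
    induction e using Sym2.ind with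
    | _ u w =>
      intro he1 he2
      refine ⟨u, w, rfl, SimpleGraph.mem_edgeFinset.1 he1, ?_, ?_, ?_, ?_⟩
      · exact (he2 u (by simp)).1
      · exact (he2 w (by simp)).1
      · exact (he2 u (by simp)).2
      · exact (he2 w (by simp)).2
  have counted : ∀ (v u w : V), G.Adj u w → G.Adj v u → G.Adj v w →
      f s(v, u) = v → f s(v, w) = v →
      (v = v ∨ v = u ∨ v = w) ∧
        ∀ y : V, (y = v ∨ y = u ∨ y = w) → y ≠ v → G.Adj v y ∧ f s(v, y) = v := by
    intro v u w huw hvu hvw hfu hfw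
    refine ⟨Or.inl rfl, ?_⟩
    intro y hy hne
    rcases hy with rfl | rfl | rfl
    · exact absurd rfl hne
    · exact ⟨hvu, hfu⟩
    · exact ⟨hvw, hfw⟩
  rw [← Finset.card_sigma]
  apply Finset.card_bij (fun p _ => insert p.1 {p.2.inf, p.2.sup})
  · rintro ⟨v, e⟩ hp
    simp only [Finset.mem_sigma, Finset.mem_univ, true_and] at hp
    obtain ⟨u, w, rfl, huw, hvu, hvw, hfu, hfw⟩ := main v e hp
    rw [pair_inf_sup]
    rw [SimpleGraph.mem_cliqueFinset_iff, SimpleGraph.is3Clique_triple_iff]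
    exact ⟨hvu, hvw, huw⟩
  · rintro ⟨v, e⟩ hp ⟨v', e'⟩ hp' heq
    simp only [Finset.mem_sigma, Finset.mem_univ, true_and] at hp hp'
    obtain ⟨u, w, rfl, huw, hvu, hvw, hfu, hfw⟩ := main v e hp
    obtain ⟨u', w', rfl, huw', hvu', hvw', hfu', hfw'⟩ := main v' e' hp'
    simp only at heq
    rw [pair_inf_sup, pair_inf_sup] at heq
    have hmemeq : ∀ x : V, (x = v ∨ x = u ∨ x = w) ↔ (x = v' ∨ x = u' ∨ x = w') := by
      intro x
      have h1 : x ∈ ({v, u, w} : Finset V) ↔ x ∈ ({v', u', w'} : Finset V) := by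
        rw [heq]
      simpa only [Finset.mem_insert, Finset.mem_singleton] using h1
    have hvv' : v = v' := by
      obtain ⟨x, _, hxuniq⟩ := huniq v u w hvu huw hvw
      have h1 := hxuniq v (counted v u w huw hvu hvw hfu hfw)
      have h2 : v' = x := by
        apply hxuniq v'
        obtain ⟨c1, c2⟩ := counted v' u' w' huw' hvu' hvw' hfu' hfw'
        exact ⟨(hmemeq v').2 c1, fun y hy hne => c2 y ((hmemeq y).1 hy) hne⟩
      exact h1.trans h2.symm
    subst hvv'
    have hv1 : v ∉ ({u, w} : Finset V) := by
      simp only [Finset.mem_insert, Finset.mem_singleton]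
      push_neg
      exact ⟨hvu.ne, hvw.ne⟩
    have hv2 : v ∉ ({u', w'} : Finset V) := by
      simp only [Finset.mem_insert, Finset.mem_singleton]
      push_neg
      exact ⟨hvu'.ne, hvw'.ne⟩
    have hpair : ({u, w} : Finset V) = {u', w'} := by
      have := congrArg (fun s => Finset.erase s v) heq
      simpa [Finset.erase_insert hv1, Finset.erase_insert hv2] using this
    have he : s(u, w) = s(u', w') := by
      have hu : u ∈ ({u', w'} : Finset V) := hpair ▸ (by simp)
      have hw : w ∈ ({u', w'} : Finset V) := hpair ▸ (by simp)
      have hu' : u' ∈ ({u, w} : Finset V) := hpair ▸ (by simp)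
      simp only [Finset.mem_insert, Finset.mem_singleton] at hu hw hu'
      rw [Sym2.eq_iff]
      rcases hu with h1 | h1
      · rcases hw with h2 | h2
        · exact absurd (h1.trans h2.symm) huw.ne
        · exact Or.inl ⟨h1, h2⟩
      · rcases hw with h2 | h2
        · exact Or.inr ⟨h1, h2⟩
        · exact absurd (h1.trans h2.symm) huw.ne
    exact congrArg (Sigma.mk v) he
  · intro t ht
    rw [SimpleGraph.mem_cliqueFinset_iff, SimpleGraph.is3Clique_iff] at ht
    obtain ⟨a, b, c, hab, hac, hbc, rfl⟩ := ht
    obtain ⟨v, ⟨hvmem, hvprop⟩, _⟩ := huniq a b c hab hbc hac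
    rcases hvmem with rfl | rfl | rfl
    · refine ⟨⟨v, s(b, c)⟩, ?_, ?_⟩
      · simp only [Finset.mem_sigma, Finset.mem_univ, true_and, Finset.mem_filter]
        refine ⟨SimpleGraph.mem_edgeFinset.2 hbc, ?_⟩
        intro x hx
        rw [Sym2.mem_iff] at hx
        rcases hx with rfl | rfl
        · exact hvprop x (Or.inr (Or.inl rfl)) hab.ne'
        · exact hvprop x (Or.inr (Or.inr rfl)) hac.ne'
      · simp only
        rw [pair_inf_sup]
    · refine ⟨⟨v, s(a, c)⟩, ?_, ?_⟩
      · simp only [Finset.mem_sigma, Finset.mem_univ, true_and, Finset.mem_filter]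
        refine ⟨SimpleGraph.mem_edgeFinset.2 hac, ?_⟩
        intro x hx
        rw [Sym2.mem_iff] at hx
        rcases hx with rfl | rfl
        · exact hvprop x (Or.inl rfl) hab.ne
        · exact hvprop x (Or.inr (Or.inr rfl)) hbc.ne'
      · simp only
        rw [pair_inf_sup]
        ext x
        simp only [Finset.mem_insert, Finset.mem_singleton]
        tauto
    · refine ⟨⟨v, s(a, b)⟩, ?_, ?_⟩
      · simp only [Finset.mem_sigma, Finset.mem_univ, true_and, Finset.mem_filter]
        refine ⟨SimpleGraph.mem_edgeFinset.2 hab, ?_⟩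
        intro x hx
        rw [Sym2.mem_iff] at hx
        rcases hx with rfl | rfl
        · exact hvprop x (Or.inl rfl) hac.ne
        · exact hvprop x (Or.inr (Or.inl rfl)) hbc.ne
      · simp only
        rw [pair_inf_sup]
        ext x
        simp only [Finset.mem_insert, Finset.mem_singleton]
        tauto

private lemma adj_all [Fintype V] (G : SimpleGraph V) {a b c : V}
    (hab : G.Adj a b) (hbc : G.Adj b c) (hac : G.Adj a c) :
    ∀ v : V, (v = a ∨ v = b ∨ v = c) → ∀ y : V, (y = a ∨ y = b ∨ y = c) →
      y ≠ v → G.Adj v y := by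
  intro v hv y hy hne
  rcases hv with rfl | rfl | rfl <;> rcases hy with rfl | rfl | rfl <;>
    first
      | exact absurd rfl hne
      | exact hab
      | exact hac
      | exact hbc
      | exact hab.symm
      | exact hac.symm
      | exact hbc.symm

private lemma part2_aux [Fintype V] (G : SimpleGraph V) :
    ∀ a b c : V, G.Adj a b → G.Adj b c → G.Adj a c →
      ∃! v : V, (v = a ∨ v = b ∨ v = c) ∧
        ∀ y : V, (y = a ∨ y = b ∨ y = c) → y ≠ v →
          (G.Adj v y ∧ (G.degree v < G.degree y ∨ (G.degree v = G.degree y ∧ v < y))) := by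
  intro a b c hab hbc hac
  obtain ⟨v, ⟨hv1, hv2⟩, hvu⟩ :=
    min3_aux (fun u v => G.degree u < G.degree v ∨ (G.degree u = G.degree v ∧ u < v))
      (prec_trich (fun v => G.degree v)) (prec_asymm (fun v => G.degree v))
      (prec_trans (fun v => G.degree v)) a b c hab.ne hbc.ne hac.ne
  refine ⟨v, ⟨hv1, fun y hy hne => ⟨adj_all G hab hbc hac v hv1 y hy hne, hv2 y hy hne⟩⟩, ?_⟩
  rintro w ⟨hw1, hw2⟩
  exact hvu w ⟨hw1, fun y hy hne => (hw2 y hy hne).2⟩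

end Aux

/-- If in the endpoint-assignment model every triangle is counted at exactly one
vertex, the pipelined count equals the number of triangles; moreover for the
lower-degree orientation (ties broken by the order on `V`) every triangle is
counted at exactly one vertex, hence the corresponding count equals `T`. -/
theorem stmt19 {V : Type*} [Fintype V] [LinearOrder V] (G : SimpleGraph V) :
    (∀ f : Sym2 V → V, (∀ e ∈ G.edgeSet, f e ∈ e) →
      (∀ a b c : V, G.Adj a b → G.Adj b c → G.Adj a c →
        ∃! v : V, v ∈ ({a, b, c} : Finset V) ∧
          ∀ y ∈ ({a, b, c} : Finset V), y ≠ v → (G.Adj v y ∧ f s(v, y) = v)) →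
      ∑ v : V, (G.edgeFinset.filter (fun e => ∀ x ∈ e, G.Adj v x ∧ f s(v, x) = v)).card
        = (G.cliqueFinset 3).card) ∧
    (∀ a b c : V, G.Adj a b → G.Adj b c → G.Adj a c →
      ∃! v : V, v ∈ ({a, b, c} : Finset V) ∧
        ∀ y ∈ ({a, b, c} : Finset V), y ≠ v →
          (G.Adj v y ∧ (G.degree v < G.degree y ∨ (G.degree v = G.degree y ∧ v < y)))) ∧
    ∑ v : V, (G.edgeFinset.filter (fun e => ∀ x ∈ e,
        G.Adj v x ∧ (G.degree v < G.degree x ∨ (G.degree v = G.degree x ∧ v < x)))).card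
      = (G.cliqueFinset 3).card := by
  refine ⟨?_, ?_, ?_⟩
  · -- Part 1
    intro f _ h2
    simp only [Finset.mem_insert, Finset.mem_singleton] at h2
    exact count_eq G f h2
  · -- Part 2
    simp only [Finset.mem_insert, Finset.mem_singleton]
    exact part2_aux G
  · -- Part 3
    set r : V → V → Prop :=
      fun u v => G.degree u < G.degree v ∨ (G.degree u = G.degree v ∧ u < v) with hr
    set f0 : Sym2 V → V := Sym2.lift ⟨fun a b => if r a b then a else b, by
      intro a b
      show (if r a b then a else b) = if r b a then b else a
      by_cases hab : a = b
      · subst hab; simp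
      · rcases prec_trich (fun v => G.degree v) a b hab with h | h
        · rw [if_pos (show r a b from h),
            if_neg (show ¬ r b a from prec_asymm (fun v => G.degree v) a b h)]
        · rw [if_neg (show ¬ r a b from prec_asymm (fun v => G.degree v) b a h),
            if_pos (show r b a from h)]⟩ with hf0
    have f0_mk : ∀ a b : V, f0 s(a, b) = if r a b then a else b := fun a b => rfl
    have f0_iff : ∀ v x : V, v ≠ x → (f0 s(v, x) = v ↔ r v x) := by
      intro v x hne
      rw [f0_mk]
      constructor
      · intro h
        by_contra hrr
        rw [if_neg hrr] at h
        exact hne h.symm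
      · intro h; rw [if_pos h]
    have huniq0 : ∀ a b c : V, G.Adj a b → G.Adj b c → G.Adj a c →
        ∃! v : V, (v = a ∨ v = b ∨ v = c) ∧
          ∀ y : V, (y = a ∨ y = b ∨ y = c) → y ≠ v → (G.Adj v y ∧ f0 s(v, y) = v) := by
      intro a b c hab hbc hac
      obtain ⟨v, ⟨hv1, hv2⟩, hvu⟩ := part2_aux G a b c hab hbc hac
      refine ⟨v, ⟨hv1, fun y hy hne => ?_⟩, ?_⟩
      · obtain ⟨h1, h2⟩ := hv2 y hy hne
        exact ⟨h1, (f0_iff v y h1.ne).2 h2⟩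
      · rintro w ⟨hw1, hw2⟩
        refine hvu w ⟨hw1, fun y hy hne => ?_⟩
        obtain ⟨h1, h2⟩ := hw2 y hy hne
        exact ⟨h1, (f0_iff w y h1.ne).1 h2⟩
    have key := count_eq G f0 huniq0
    rw [← key]
    apply Finset.sum_congr rfl
    intro v _
    congr 1
    apply Finset.filter_congr
    intro e _
    constructor
    · intro h x hx
      obtain ⟨h1, h2⟩ := h x hx
      exact ⟨h1, (f0_iff v x h1.ne).2 h2⟩
    · intro h x hx
      obtain ⟨h1, h2⟩ := h x hx
      exact ⟨h1, (f0_iff v x h1.ne).1 h2⟩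
end
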